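/- Let a ≥ 1 and assume each agent values at most a items positively, i.e., |{ g ∈ M : v_i(g) ≥ 1 }| ≤ a for every i ∈ N. Then for every contiguous allocation A* there exists a contiguous allocation A such that a · min_{i∈N} v_i(A_i) ≥ min_{i∈N} v_i(A*_i). In particular, the maximum egalitarian social welfare achievable by an agent-side injective assignment of single items (each agent i receives one item μ(i), with μ injective) is at least 1/a times the maximum egalitarian social welfare over contiguous allocations. -/

import Mathlib

/-!
Agents are `0, …, n-1` (with `n ≥ 1`), items are `0, …, m-1` arranged on a path
in index order, and `v i g` is the value of item `g` for agent `i` (valuations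
are additive).  The instance is `(a, ·)`-sparse: every agent values at most `a`
items positively.

A contiguous allocation is `A : ℕ → Finset ℕ` whose bundles (for `i < n`) are
(possibly empty) intervals, pairwise disjoint, and cover `Finset.range m`; its
egalitarian social welfare is `min_{i < n} ∑ g ∈ A i, v i g`, written as
`sInf {x | ∃ i < n, x = ∑ g ∈ A i, v i g}`.

First claim: for every contiguous allocation `A*` there is a contiguous
allocation `A` with `a · min_i v_i(A_i) ≥ min_i v_i(A*_i)`.

Second claim ("in particular"): an agent-side injective assignment of single
items is an injective `μ` on `{0, …, n-1}` with `μ i < m`, agent `i` receiving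
exactly item `μ i`; the best such egalitarian welfare `min_{i<n} v i (μ i)` is
at least `1/a` times the best egalitarian welfare of contiguous allocations.
-/


private lemma sparse_sum_le (i a m : ℕ) (v : ℕ → ℕ → ℕ) (A : Finset ℕ)
    (hA : A ⊆ Finset.range m)
    (hs : ((Finset.range m).filter fun g => 1 ≤ v i g).card ≤ a)
    (g0 : ℕ) (hg0 : ∀ x ∈ A, v i x ≤ v i g0) :
    ∑ g ∈ A, v i g ≤ a * v i g0 := by
  have h1 : ∑ g ∈ A, v i g = ∑ g ∈ A.filter (fun g => 1 ≤ v i g), v i g := by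
    rw [Finset.sum_filter_of_ne]
    intro x _ hx
    omega
  rw [h1]
  have h2 : ∑ g ∈ A.filter (fun g => 1 ≤ v i g), v i g
      ≤ (A.filter (fun g => 1 ≤ v i g)).card * v i g0 := by
    have := Finset.sum_le_card_nsmul (A.filter (fun g => 1 ≤ v i g)) (v i) (v i g0)
      (fun x hx => hg0 x (Finset.mem_filter.mp hx).1)
    simpa [smul_eq_mul] using this
  have h3 : (A.filter (fun g => 1 ≤ v i g)).card
      ≤ ((Finset.range m).filter fun g => 1 ≤ v i g).card :=
    Finset.card_le_card (Finset.filter_subset_filter _ hA)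
  calc ∑ g ∈ A.filter (fun g => 1 ≤ v i g), v i g
      ≤ (A.filter (fun g => 1 ≤ v i g)).card * v i g0 := h2
    _ ≤ a * v i g0 := Nat.mul_le_mul_right _ (le_trans h3 hs)

theorem sparse_emax_single_item_approx (n m a : ℕ) (hn : 0 < n) (ha : 1 ≤ a)
    (v : ℕ → ℕ → ℕ)
    (hsparse : ∀ i < n, ((Finset.range m).filter fun g => 1 ≤ v i g).card ≤ a) :
    (∀ Astar : ℕ → Finset ℕ,
      (∀ i < n, ∃ c d, Astar i = Finset.Ico c d) →
      (∀ i < n, ∀ j < n, i ≠ j → Disjoint (Astar i) (Astar j)) →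
      (Finset.range n).biUnion Astar = Finset.range m →
      ∃ A : ℕ → Finset ℕ,
        (∀ i < n, ∃ c d, A i = Finset.Ico c d) ∧
        (∀ i < n, ∀ j < n, i ≠ j → Disjoint (A i) (A j)) ∧
        (Finset.range n).biUnion A = Finset.range m ∧
        sInf {x : ℕ | ∃ i < n, x = ∑ g ∈ Astar i, v i g}
          ≤ a * sInf {x : ℕ | ∃ i < n, x = ∑ g ∈ A i, v i g}) ∧
    sSup {w : ℕ | ∃ A : ℕ → Finset ℕ,
        (∀ i < n, ∃ c d, A i = Finset.Ico c d) ∧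
        (∀ i < n, ∀ j < n, i ≠ j → Disjoint (A i) (A j)) ∧
        (Finset.range n).biUnion A = Finset.range m ∧
        w = sInf {x : ℕ | ∃ i < n, x = ∑ g ∈ A i, v i g}}
      ≤ a * sSup {w : ℕ | ∃ μ : ℕ → ℕ,
        Set.InjOn μ (Set.Iio n) ∧ (∀ i < n, μ i < m) ∧
        w = sInf {x : ℕ | ∃ i < n, x = v i (μ i)}} := by
  constructor
  · -- first claim: take A = Astar
    intro Astar h1 h2 h3
    refine ⟨Astar, h1, h2, h3, ?_⟩
    exact Nat.le_mul_of_pos_left _ ha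
  · -- second claim
    set T : Set ℕ := {w : ℕ | ∃ μ : ℕ → ℕ,
        Set.InjOn μ (Set.Iio n) ∧ (∀ i < n, μ i < m) ∧
        w = sInf {x : ℕ | ∃ i < n, x = v i (μ i)}} with hT
    -- T is bounded above
    have hbdd : BddAbove T := by
      refine ⟨∑ i ∈ Finset.range n, ∑ g ∈ Finset.range m, v i g, ?_⟩
      rintro w ⟨μ, hinj, hlt, rfl⟩
      have hne : {x : ℕ | ∃ i < n, x = v i (μ i)}.Nonempty := ⟨v 0 (μ 0), 0, hn, rfl⟩
      obtain ⟨i, hi, hieq⟩ := Nat.sInf_mem hne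
      rw [hieq]
      calc v i (μ i) ≤ ∑ g ∈ Finset.range m, v i g :=
            Finset.single_le_sum (fun g _ => Nat.zero_le _)
              (Finset.mem_range.mpr (hlt i hi))
        _ ≤ ∑ i ∈ Finset.range n, ∑ g ∈ Finset.range m, v i g :=
            Finset.single_le_sum (f := fun i => ∑ g ∈ Finset.range m, v i g)
              (fun j _ => Nat.zero_le _) (Finset.mem_range.mpr hi)
    refine csSup_le' ?_
    rintro w ⟨A, hIco, hdisj, hcov, rfl⟩
    by_cases hempty : ∃ i < n, (A i) = ∅
    · obtain ⟨i, hi, hAi⟩ := hempty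
      have : sInf {x : ℕ | ∃ i < n, x = ∑ g ∈ A i, v i g} ≤ 0 := by
        apply Nat.sInf_le
        exact ⟨i, hi, by simp [hAi]⟩
      simp only [Nat.le_zero] at this
      rw [this]
      exact Nat.zero_le _
    · push_neg at hempty
      -- choose for each i < n a max-value item in A i
      have hchoice : ∀ i, i < n → ∃ g ∈ A i, ∀ x ∈ A i, v i x ≤ v i g := by
        intro i hi
        have hne : (A i).Nonempty := hempty i hi
        obtain ⟨b, hb, hmax⟩ := Finset.exists_max_image (A i) (v i) hne
        exact ⟨b, hb, hmax⟩
      classical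
      set μ : ℕ → ℕ := fun i => if h : i < n then (hchoice i h).choose else 0 with hμ
      have hμmem : ∀ i (h : i < n), μ i ∈ A i := by
        intro i h
        simp only [hμ, dif_pos h]
        exact (hchoice i h).choose_spec.1
      have hμmax : ∀ i (h : i < n), ∀ x ∈ A i, v i x ≤ v i (μ i) := by
        intro i h
        simp only [hμ, dif_pos h]
        exact (hchoice i h).choose_spec.2
      have hAsub : ∀ i, i < n → A i ⊆ Finset.range m := by
        intro i hi g hg
        rw [← hcov]
        exact Finset.mem_biUnion.mpr ⟨i, Finset.mem_range.mpr hi, hg⟩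
      have hinj : Set.InjOn μ (Set.Iio n) := by
        intro i hi j hj hij
        by_contra hne
        have := hdisj i hi j hj hne
        exact (Finset.disjoint_left.mp this (hμmem i hi)) (hij ▸ hμmem j hj)
      have hlt : ∀ i < n, μ i < m := fun i hi =>
        Finset.mem_range.mp (hAsub i hi (hμmem i hi))
      have hmemT : sInf {x : ℕ | ∃ i < n, x = v i (μ i)} ∈ T :=
        ⟨μ, hinj, hlt, rfl⟩
      have hne' : {x : ℕ | ∃ i < n, x = v i (μ i)}.Nonempty := ⟨v 0 (μ 0), 0, hn, rfl⟩
      obtain ⟨j, hj, hjeq⟩ := Nat.sInf_mem hne'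
      have key : sInf {x : ℕ | ∃ i < n, x = ∑ g ∈ A i, v i g}
          ≤ a * sInf {x : ℕ | ∃ i < n, x = v i (μ i)} := by
        calc sInf {x : ℕ | ∃ i < n, x = ∑ g ∈ A i, v i g}
            ≤ ∑ g ∈ A j, v j g := Nat.sInf_le ⟨j, hj, rfl⟩
          _ ≤ a * v j (μ j) := sparse_sum_le j a m v (A j) (hAsub j hj)
              (hsparse j hj) (μ j) (hμmax j hj)
          _ = a * sInf {x : ℕ | ∃ i < n, x = v i (μ i)} := by rw [hjeq]
      calc sInf {x : ℕ | ∃ i < n, x = ∑ g ∈ A i, v i g}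
          ≤ a * sInf {x : ℕ | ∃ i < n, x = v i (μ i)} := key
        _ ≤ a * sSup T := Nat.mul_le_mul_left a (le_csSup hbdd hmemT)
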